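/- arXiv:1302.5812 — 3 statements merged into one kernel-verified Lean document; each statement's English description precedes it below -/
import Mathlib

section
/- Let a be continuous on [0,T]×[0,1], uniformly L-Lipschitz in x, and satisfy a(t,x) ≥ c > 0 everywhere. For (t,x) ∈ [0,T]×[0,1], let e(t,x) be the entrance time of the backward characteristic through (t,x), i.e., the left endpoint of the maximal interval of existence in [0,t] of the flow φ(·,t,x). Then e is Lipschitz on [0,T]×[0,1] with Lipschitz constant c⁻¹·max(1, ‖a‖_{C⁰([0,T]×[0,1])})·e^{LT}. -/
open Set

lemma flow_upper' {ψ g : ℝ → ℝ} {α β M : ℝ}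
    (hd : ∀ s ∈ Set.Icc α β, HasDerivWithinAt ψ (g s) (Set.Icc α β) s)
    (hg : ∀ s ∈ Set.Icc α β, |g s| ≤ M) :
    ∀ s' ∈ Set.Icc α β, |ψ s' - ψ α| ≤ M * (s' - α) := by
  have := norm_image_sub_le_of_norm_deriv_le_segment' (f := ψ) (f' := g) hd
    (fun s hs => hg s (Ico_subset_Icc_self hs))
  simpa [Real.norm_eq_abs] using this

lemma flow_lower' {ψ g : ℝ → ℝ} {α β c : ℝ}
    (hd : ∀ s ∈ Set.Icc α β, HasDerivWithinAt ψ (g s) (Set.Icc α β) s)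
    (hg : ∀ s ∈ Set.Icc α β, c ≤ g s) :
    ∀ s ∈ Set.Icc α β, ∀ s' ∈ Set.Icc α β, s ≤ s' → c * (s' - s) ≤ ψ s' - ψ s := by
  have hder : ∀ s ∈ Set.Ioo α β, HasDerivAt ψ (g s) s := by
    intro s hs
    exact (hd s (Ioo_subset_Icc_self hs)).hasDerivAt (Icc_mem_nhds hs.1 hs.2)
  refine (convex_Icc α β).mul_sub_le_image_sub_of_le_deriv
    (fun s hs => (hd s hs).continuousWithinAt) ?_ ?_
  · rw [interior_Icc]
    exact fun s hs => (hder s hs).differentiableAt.differentiableWithinAt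
  · rw [interior_Icc]
    intro s hs
    rw [(hder s hs).deriv]
    exact hg s (Ioo_subset_Icc_self hs)

lemma gronwall_backward' {w d : ℝ → ℝ} {α β L : ℝ} (hαβ : α ≤ β)
    (hd : ∀ s ∈ Set.Icc α β, HasDerivWithinAt w (d s) (Set.Icc α β) s)
    (hb : ∀ s ∈ Set.Icc α β, |d s| ≤ L * |w s|) :
    |w α| ≤ |w β| * Real.exp (L * (β - α)) := by
  set σ : ℝ → ℝ := fun s => α + β - s with hσdef
  have hmaps : Set.MapsTo σ (Set.Icc α β) (Set.Icc α β) := by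
    intro s hs
    exact ⟨by simp [hσdef]; linarith [hs.2], by simp [hσdef]; linarith [hs.1]⟩
  have hF : ∀ s ∈ Set.Icc α β,
      HasDerivWithinAt (fun s => w (σ s)) (d (σ s) * (-1)) (Set.Icc α β) s := by
    intro s hs
    have hσd : HasDerivWithinAt σ (-1) (Set.Icc α β) s := by
      simpa using (hasDerivWithinAt_id s (Set.Icc α β)).const_sub (α + β)
    exact HasDerivWithinAt.comp s (hd (σ s) (hmaps hs)) hσd hmaps
  have hgron := norm_le_gronwallBound_of_norm_deriv_right_le
    (f := fun s => w (σ s)) (f' := fun s => d (σ s) * (-1)) (δ := |w β|) (K := L) (ε := 0)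
    (a := α) (b := β)
    (fun s hs => (hF s hs).continuousWithinAt)
    (fun x hx => (hF x (Ico_subset_Icc_self hx)).mono_of_mem_nhdsWithin
      (Icc_mem_nhdsGE_of_mem hx))
    (by simp [hσdef, Real.norm_eq_abs])
    (by
      intro x hx
      have := hb (σ x) (hmaps (Ico_subset_Icc_self hx))
      simpa [Real.norm_eq_abs, abs_mul] using this)
  have := hgron β ⟨hαβ, le_refl β⟩
  rw [gronwallBound_ε0] at this
  simpa [hσdef, Real.norm_eq_abs] using this

/-- The backward entrance time `e` of the flow of a vector field `a ≥ c > 0`,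
continuous and uniformly `L`-Lipschitz in `x` and bounded by `M`, is Lipschitz on
`[0,T]×[0,1]` with constant `c⁻¹·max(1,M)·exp(LT)`. -/
theorem stmt_3 (T L M c : ℝ) (hT : 0 < T) (hL : 0 < L) (hM : 0 ≤ M) (hc : 0 < c)
    (a : ℝ → ℝ → ℝ)
    (ha_cont : ContinuousOn (fun p : ℝ × ℝ => a p.1 p.2)
      (Set.Icc 0 T ×ˢ Set.Icc 0 1))
    (ha_bdd : ∀ t ∈ Set.Icc (0:ℝ) T, ∀ x ∈ Set.Icc (0:ℝ) 1, |a t x| ≤ M)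
    (ha_pos : ∀ t ∈ Set.Icc (0:ℝ) T, ∀ x ∈ Set.Icc (0:ℝ) 1, c ≤ a t x)
    (ha_lip : ∀ t ∈ Set.Icc (0:ℝ) T, ∀ x ∈ Set.Icc (0:ℝ) 1, ∀ y ∈ Set.Icc (0:ℝ) 1,
      |a t x - a t y| ≤ L * |x - y|)
    (φ : ℝ → ℝ → ℝ → ℝ) (e f : ℝ → ℝ → ℝ)
    (hef : ∀ t ∈ Set.Icc (0:ℝ) T, ∀ x ∈ Set.Icc (0:ℝ) 1,
      0 ≤ e t x ∧ e t x ≤ t ∧ t ≤ f t x ∧ f t x ≤ T)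
    (hφ_init : ∀ t ∈ Set.Icc (0:ℝ) T, ∀ x ∈ Set.Icc (0:ℝ) 1, φ t t x = x)
    (hφ_mem : ∀ t ∈ Set.Icc (0:ℝ) T, ∀ x ∈ Set.Icc (0:ℝ) 1,
      ∀ s ∈ Set.Icc (e t x) (f t x), φ s t x ∈ Set.Icc (0:ℝ) 1)
    (hφ_ode : ∀ t ∈ Set.Icc (0:ℝ) T, ∀ x ∈ Set.Icc (0:ℝ) 1,
      ∀ s ∈ Set.Icc (e t x) (f t x),
        HasDerivWithinAt (fun σ => φ σ t x) (a s (φ s t x))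
          (Set.Icc (e t x) (f t x)) s)
    -- if the backward characteristic stops before time `0`, it exits through `x = 0`
    (he_exit : ∀ t ∈ Set.Icc (0:ℝ) T, ∀ x ∈ Set.Icc (0:ℝ) 1,
      0 < e t x → φ (e t x) t x = 0) :
    ∀ t₁ ∈ Set.Icc (0:ℝ) T, ∀ x₁ ∈ Set.Icc (0:ℝ) 1,
    ∀ t₂ ∈ Set.Icc (0:ℝ) T, ∀ x₂ ∈ Set.Icc (0:ℝ) 1,
      |e t₁ x₁ - e t₂ x₂| ≤
        c⁻¹ * max 1 M * Real.exp (L * T) * (|t₁ - t₂| + |x₁ - x₂|) := by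
  have hcM : c ≤ M := by
    have h1 := ha_pos 0 ⟨le_refl 0, hT.le⟩ 0 ⟨le_refl 0, zero_le_one⟩
    have h2 := ha_bdd 0 ⟨le_refl 0, hT.le⟩ 0 ⟨le_refl 0, zero_le_one⟩
    exact h1.trans ((le_abs_self _).trans h2)
  have hmax : (0:ℝ) < max 1 M := lt_of_lt_of_le one_pos (le_max_left 1 M)
  have hexp1 : (1:ℝ) ≤ Real.exp (L * T) := Real.one_le_exp (by positivity)
  suffices H : ∀ t₁ ∈ Set.Icc (0:ℝ) T, ∀ x₁ ∈ Set.Icc (0:ℝ) 1,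
      ∀ t₂ ∈ Set.Icc (0:ℝ) T, ∀ x₂ ∈ Set.Icc (0:ℝ) 1,
      e t₁ x₁ - e t₂ x₂ ≤ c⁻¹ * max 1 M * Real.exp (L * T) * (|t₁ - t₂| + |x₁ - x₂|) by
    intro t₁ ht₁ x₁ hx₁ t₂ ht₂ x₂ hx₂
    rw [abs_sub_le_iff]
    refine ⟨H t₁ ht₁ x₁ hx₁ t₂ ht₂ x₂ hx₂, ?_⟩
    have := H t₂ ht₂ x₂ hx₂ t₁ ht₁ x₁ hx₁
    rwa [abs_sub_comm t₂ t₁, abs_sub_comm x₂ x₁] at this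
  intro t₁ ht₁ x₁ hx₁ t₂ ht₂ x₂ hx₂
  obtain ⟨he₁0, he₁t, ht₁f, hf₁T⟩ := hef t₁ ht₁ x₁ hx₁
  obtain ⟨he₂0, he₂t, ht₂f, hf₂T⟩ := hef t₂ ht₂ x₂ hx₂
  set S := |t₁ - t₂| + |x₁ - x₂| with hS
  have hS0 : 0 ≤ S := add_nonneg (abs_nonneg _) (abs_nonneg _)
  rcases le_or_gt (e t₁ x₁) (e t₂ x₂) with hle | hlt
  · have h0 : e t₁ x₁ - e t₂ x₂ ≤ 0 := sub_nonpos.mpr hle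
    refine h0.trans ?_
    have : (0:ℝ) < Real.exp (L * T) := Real.exp_pos _
    positivity
  -- main case : e₂ < e₁
  have he₁pos : 0 < e t₁ x₁ := lt_of_le_of_lt he₂0 hlt
  have hexit : φ (e t₁ x₁) t₁ x₁ = 0 := he_exit t₁ ht₁ x₁ hx₁ he₁pos
  -- derivative restriction helpers
  have hd₁ : ∀ (α β : ℝ), Set.Icc α β ⊆ Set.Icc (e t₁ x₁) (f t₁ x₁) →
      ∀ s ∈ Set.Icc α β,
        HasDerivWithinAt (fun σ => φ σ t₁ x₁) (a s (φ s t₁ x₁)) (Set.Icc α β) s :=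
    fun α β hsub s hs => (hφ_ode t₁ ht₁ x₁ hx₁ s (hsub hs)).mono hsub
  have hd₂ : ∀ (α β : ℝ), Set.Icc α β ⊆ Set.Icc (e t₂ x₂) (f t₂ x₂) →
      ∀ s ∈ Set.Icc α β,
        HasDerivWithinAt (fun σ => φ σ t₂ x₂) (a s (φ s t₂ x₂)) (Set.Icc α β) s :=
    fun α β hsub s hs => (hφ_ode t₂ ht₂ x₂ hx₂ s (hsub hs)).mono hsub
  have hmemT₁ : ∀ s ∈ Set.Icc (e t₁ x₁) (f t₁ x₁), s ∈ Set.Icc (0:ℝ) T :=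
    fun s hs => ⟨he₁0.trans hs.1, hs.2.trans hf₁T⟩
  have hmemT₂ : ∀ s ∈ Set.Icc (e t₂ x₂) (f t₂ x₂), s ∈ Set.Icc (0:ℝ) T :=
    fun s hs => ⟨he₂0.trans hs.1, hs.2.trans hf₂T⟩
  have hbound₁ : ∀ s ∈ Set.Icc (e t₁ x₁) (f t₁ x₁), |a s (φ s t₁ x₁)| ≤ M :=
    fun s hs => ha_bdd s (hmemT₁ s hs) _ (hφ_mem t₁ ht₁ x₁ hx₁ s hs)
  have hbound₂ : ∀ s ∈ Set.Icc (e t₂ x₂) (f t₂ x₂), |a s (φ s t₂ x₂)| ≤ M :=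
    fun s hs => ha_bdd s (hmemT₂ s hs) _ (hφ_mem t₂ ht₂ x₂ hx₂ s hs)
  have hpos₂ : ∀ s ∈ Set.Icc (e t₂ x₂) (f t₂ x₂), c ≤ a s (φ s t₂ x₂) :=
    fun s hs => ha_pos s (hmemT₂ s hs) _ (hφ_mem t₂ ht₂ x₂ hx₂ s hs)
  have hψ2e : 0 ≤ φ (e t₂ x₂) t₂ x₂ :=
    (hφ_mem t₂ ht₂ x₂ hx₂ (e t₂ x₂) ⟨le_refl _, he₂t.trans ht₂f⟩).1
  have h4 : M * |t₁ - t₂| + |x₁ - x₂| ≤ max 1 M * S := by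
    rw [hS, mul_add]
    have ha1 : M * |t₁ - t₂| ≤ max 1 M * |t₁ - t₂| :=
      mul_le_mul_of_nonneg_right (le_max_right 1 M) (abs_nonneg _)
    have ha2 := mul_le_mul_of_nonneg_right (le_max_left 1 M) (abs_nonneg (x₁ - x₂))
    rw [one_mul] at ha2
    linarith
  have hkey : c * (e t₁ x₁ - e t₂ x₂) ≤ max 1 M * Real.exp (L * T) * S := by
    rcases lt_or_ge t₂ (e t₁ x₁) with hcase | hcase
    · -- crude case : t₂ < e₁
      have hsub1 : Set.Icc (e t₁ x₁) t₁ ⊆ Set.Icc (e t₁ x₁) (f t₁ x₁) :=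
        Set.Icc_subset_Icc le_rfl ht₁f
      have hx1M : x₁ ≤ M * (t₁ - e t₁ x₁) := by
        have hup := flow_upper' (hd₁ _ _ hsub1) (fun s hs => hbound₁ s (hsub1 hs))
          t₁ ⟨he₁t, le_refl t₁⟩
        rw [hφ_init t₁ ht₁ x₁ hx₁, hexit, sub_zero] at hup
        exact (le_abs_self x₁).trans hup
      have hsub2 : Set.Icc (e t₂ x₂) t₂ ⊆ Set.Icc (e t₂ x₂) (f t₂ x₂) :=
        Set.Icc_subset_Icc le_rfl ht₂f
      have hlow2 : c * (t₂ - e t₂ x₂) ≤ x₂ - φ (e t₂ x₂) t₂ x₂ := by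
        have := flow_lower' (hd₂ _ _ hsub2) (fun s hs => hpos₂ s (hsub2 hs))
          (e t₂ x₂) ⟨le_refl _, he₂t⟩ t₂ ⟨he₂t, le_refl _⟩ he₂t
        rwa [hφ_init t₂ ht₂ x₂ hx₂] at this
      have h0 : c * (e t₁ x₁ - e t₂ x₂) = c * (e t₁ x₁ - t₂) + c * (t₂ - e t₂ x₂) := by ring
      have h1 : c * (e t₁ x₁ - t₂) ≤ M * (e t₁ x₁ - t₂) :=
        mul_le_mul_of_nonneg_right hcM (by linarith)
      have h2 : M * (e t₁ x₁ - t₂) + M * (t₁ - e t₁ x₁) = M * (t₁ - t₂) := by ring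
      have h3 : M * (t₁ - t₂) ≤ M * |t₁ - t₂| :=
        mul_le_mul_of_nonneg_left (le_abs_self _) hM
      have habs_x : x₂ - x₁ ≤ |x₁ - x₂| := by
        rw [abs_sub_comm]; exact le_abs_self _
      have h5 : max 1 M * S ≤ max 1 M * Real.exp (L * T) * S := by
        nlinarith [mul_nonneg (mul_nonneg hmax.le hS0) (sub_nonneg.2 hexp1)]
      linarith
    · -- Gronwall case : e₁ ≤ t₂
      set τ := min t₁ t₂ with hτdef
      have hτe : e t₁ x₁ ≤ τ := le_min he₁t hcase
      have hτT : τ ≤ T := (min_le_left t₁ t₂).trans ht₁.2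
      have hsub1 : Set.Icc (e t₁ x₁) τ ⊆ Set.Icc (e t₁ x₁) (f t₁ x₁) :=
        Set.Icc_subset_Icc le_rfl ((min_le_left _ _).trans ht₁f)
      have hsub2 : Set.Icc (e t₁ x₁) τ ⊆ Set.Icc (e t₂ x₂) (f t₂ x₂) :=
        Set.Icc_subset_Icc hlt.le ((min_le_right _ _).trans ht₂f)
      have hdw : ∀ s ∈ Set.Icc (e t₁ x₁) τ,
          HasDerivWithinAt (fun σ => φ σ t₁ x₁ - φ σ t₂ x₂)
            (a s (φ s t₁ x₁) - a s (φ s t₂ x₂)) (Set.Icc (e t₁ x₁) τ) s :=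
        fun s hs => (hd₁ _ _ hsub1 s hs).sub (hd₂ _ _ hsub2 s hs)
      have hbw : ∀ s ∈ Set.Icc (e t₁ x₁) τ,
          |a s (φ s t₁ x₁) - a s (φ s t₂ x₂)| ≤ L * |φ s t₁ x₁ - φ s t₂ x₂| := by
        intro s hs
        exact ha_lip s (hmemT₁ s (hsub1 hs)) _ (hφ_mem t₁ ht₁ x₁ hx₁ s (hsub1 hs))
          _ (hφ_mem t₂ ht₂ x₂ hx₂ s (hsub2 hs))
      have hgron := gronwall_backward' hτe hdw hbw
      simp -failIfUnchanged only [] at hgron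
      -- base bound at τ
      have hbase : |φ τ t₁ x₁ - φ τ t₂ x₂| ≤ |x₁ - x₂| + M * |t₁ - t₂| := by
        rcases le_total t₁ t₂ with h | h
        · have hτ : τ = t₁ := min_eq_left h
          have hsub4 : Set.Icc t₁ t₂ ⊆ Set.Icc (e t₂ x₂) (f t₂ x₂) :=
            Set.Icc_subset_Icc (hlt.le.trans he₁t) ht₂f
          have hup := flow_upper' (hd₂ _ _ hsub4) (fun s hs => hbound₂ s (hsub4 hs))
            t₂ ⟨h, le_refl t₂⟩
          rw [hφ_init t₂ ht₂ x₂ hx₂] at hup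
          have h6 : |x₁ - φ t₁ t₂ x₂| ≤ |x₁ - x₂| + |x₂ - φ t₁ t₂ x₂| := abs_sub_le _ _ _
          have h7 : |t₁ - t₂| = t₂ - t₁ := by
            rw [abs_sub_comm]; exact abs_of_nonneg (by linarith)
          rw [hτ, hφ_init t₁ ht₁ x₁ hx₁, h7]
          linarith
        · have hτ : τ = t₂ := min_eq_right h
          have hsub4 : Set.Icc t₂ t₁ ⊆ Set.Icc (e t₁ x₁) (f t₁ x₁) :=
            Set.Icc_subset_Icc hcase ht₁f
          have hup := flow_upper' (hd₁ _ _ hsub4) (fun s hs => hbound₁ s (hsub4 hs))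
            t₁ ⟨h, le_refl t₁⟩
          rw [hφ_init t₁ ht₁ x₁ hx₁] at hup
          have h6 : |φ t₂ t₁ x₁ - x₂| ≤ |φ t₂ t₁ x₁ - x₁| + |x₁ - x₂| := abs_sub_le _ _ _
          have h6' : |φ t₂ t₁ x₁ - x₁| = |x₁ - φ t₂ t₁ x₁| := abs_sub_comm _ _
          have h7 : |t₁ - t₂| = t₁ - t₂ := abs_of_nonneg (by linarith)
          rw [hτ, hφ_init t₂ ht₂ x₂ hx₂, h7]
          linarith
      have hsub3 : Set.Icc (e t₂ x₂) (e t₁ x₁) ⊆ Set.Icc (e t₂ x₂) (f t₂ x₂) :=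
        Set.Icc_subset_Icc le_rfl (hcase.trans ht₂f)
      have hlow : c * (e t₁ x₁ - e t₂ x₂) ≤ φ (e t₁ x₁) t₂ x₂ - φ (e t₂ x₂) t₂ x₂ :=
        flow_lower' (hd₂ _ _ hsub3) (fun s hs => hpos₂ s (hsub3 hs))
          (e t₂ x₂) ⟨le_rfl, hlt.le⟩ (e t₁ x₁) ⟨hlt.le, le_rfl⟩ hlt.le
      have habs : φ (e t₁ x₁) t₂ x₂ ≤ |φ (e t₁ x₁) t₁ x₁ - φ (e t₁ x₁) t₂ x₂| := by
        rw [hexit, zero_sub, abs_neg]; exact le_abs_self _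
      have hexp2 : Real.exp (L * (τ - e t₁ x₁)) ≤ Real.exp (L * T) :=
        Real.exp_le_exp.2 (mul_le_mul_of_nonneg_left (by linarith) hL.le)
      have hchain : |φ τ t₁ x₁ - φ τ t₂ x₂| * Real.exp (L * (τ - e t₁ x₁)) ≤
          (|x₁ - x₂| + M * |t₁ - t₂|) * Real.exp (L * T) :=
        mul_le_mul hbase hexp2 (Real.exp_pos _).le
          (by positivity)
      have h9 : (|x₁ - x₂| + M * |t₁ - t₂|) * Real.exp (L * T) ≤
          max 1 M * Real.exp (L * T) * S := by
        calc (|x₁ - x₂| + M * |t₁ - t₂|) * Real.exp (L * T)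
            ≤ (max 1 M * S) * Real.exp (L * T) :=
              mul_le_mul_of_nonneg_right (by linarith) (Real.exp_pos _).le
          _ = max 1 M * Real.exp (L * T) * S := by ring
      linarith
  calc e t₁ x₁ - e t₂ x₂ = c⁻¹ * (c * (e t₁ x₁ - e t₂ x₂)) := by field_simp
    _ ≤ c⁻¹ * (max 1 M * Real.exp (L * T) * S) :=
        mul_le_mul_of_nonneg_left hkey (inv_nonneg.2 hc.le)
    _ = c⁻¹ * max 1 M * Real.exp (L * T) * S := by ring
end

section
/- Let a, aₙ be continuous on [0,T]×[0,1], uniformly Lipschitz in x with a uniform bound on the Lipschitz constants, with a(t,x) ≥ c > 0 and aₙ(t,x) ≥ c > 0, and suppose ‖aₙ - a‖_{C⁰([0,T]×[0,1])} → 0. Let eₙ, e be the corresponding backward entrance times of the flows. If (tₙ,xₙ) → (t,x) in [0,T]×[0,1] and (t,x) does not lie on the characteristic issuing from (0,0), then eₙ(tₙ,xₙ) → e(t,x). -/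
open Set Real

/-- Two-sided speed bound from a derivative bound. -/
lemma stmt4_speed {w g : ℝ → ℝ} {α β c M : ℝ} (hc : 0 ≤ c)
    (hw : ∀ s ∈ Set.Icc α β, HasDerivWithinAt w (g s) (Set.Icc α β) s)
    (hgc : ∀ s ∈ Set.Icc α β, c ≤ g s) (hgM : ∀ s ∈ Set.Icc α β, g s ≤ M)
    {r s : ℝ} (hr : r ∈ Set.Icc α β) (hs : s ∈ Set.Icc α β) (hrs : r ≤ s) :
    c * (s - r) ≤ w s - w r ∧ w s - w r ≤ M * (s - r) := by
  have hsub : Set.Icc r s ⊆ Set.Icc α β := Set.Icc_subset_Icc hr.1 hs.2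
  have hw' : ∀ σ ∈ Set.Icc r s, HasDerivWithinAt w (g σ) (Set.Icc r s) σ :=
    fun σ hσ => (hw σ (hsub hσ)).mono hsub
  have hupper := norm_image_sub_le_of_norm_deriv_le_segment' (C := M) hw'
    (fun σ hσ => by
      have h1 := hgc σ (hsub (Set.Ico_subset_Icc_self hσ))
      have h2 := hgM σ (hsub (Set.Ico_subset_Icc_self hσ))
      rw [Real.norm_eq_abs, abs_le]; constructor <;> linarith)
    s ⟨hrs, le_rfl⟩
  have hw'' : ∀ σ ∈ Set.Icc r s, HasDerivWithinAt (fun τ => M * τ - w τ) (M - g σ)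
      (Set.Icc r s) σ := by
    intro σ hσ
    have hid : HasDerivWithinAt (fun τ : ℝ => M * τ) M (Set.Icc r s) σ := by
      simpa using (hasDerivWithinAt_id σ (Set.Icc r s)).const_mul M
    exact hid.sub (hw' σ hσ)
  have hlower := norm_image_sub_le_of_norm_deriv_le_segment' (C := M - c) hw''
    (fun σ hσ => by
      have h1 := hgc σ (hsub (Set.Ico_subset_Icc_self hσ))
      have h2 := hgM σ (hsub (Set.Ico_subset_Icc_self hσ))
      rw [Real.norm_eq_abs, abs_le]; constructor <;> linarith)
    s ⟨hrs, le_rfl⟩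
  rw [Real.norm_eq_abs, abs_le] at hupper hlower
  constructor <;> nlinarith [hupper.1, hupper.2, hlower.1, hlower.2]

/-- Bound for `gronwallBound`. -/
lemma stmt4_gb_le {δ L ε x T' : ℝ} (hδ : 0 ≤ δ) (hε : 0 ≤ ε) (hL : 0 < L)
    (hx : 0 ≤ x) (hxT : x ≤ T') :
    gronwallBound δ L ε x ≤ (δ + ε * T') * Real.exp (L * T') := by
  rw [gronwallBound_of_K_ne_0 hL.ne']
  have h1 : Real.exp (L * x) ≤ Real.exp (L * T') :=
    Real.exp_le_exp.2 (by nlinarith)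
  have hinv : Real.exp (-(L * x)) * Real.exp (L * x) = 1 := by
    rw [← Real.exp_add]; simp
  have h2 : Real.exp (L * x) - 1 ≤ L * x * Real.exp (L * x) := by
    nlinarith [Real.add_one_le_exp (-(L * x)), Real.exp_pos (L * x)]
  have h3 : (1:ℝ) ≤ Real.exp (L * x) := Real.one_le_exp (by positivity)
  have key : ε / L * (Real.exp (L * x) - 1) ≤ ε * x * Real.exp (L * x) := by
    rw [div_mul_eq_mul_div, div_le_iff₀ hL]
    nlinarith
  have h4 : ε * x * Real.exp (L * x) ≤ ε * T' * Real.exp (L * T') :=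
    calc ε * x * Real.exp (L * x) ≤ ε * T' * Real.exp (L * x) :=
          mul_le_mul_of_nonneg_right (mul_le_mul_of_nonneg_left hxT hε) (Real.exp_pos _).le
      _ ≤ ε * T' * Real.exp (L * T') :=
          mul_le_mul_of_nonneg_left h1 (mul_nonneg hε (hx.trans hxT))
  have h5 : δ * Real.exp (L * x) ≤ δ * Real.exp (L * T') :=
    mul_le_mul_of_nonneg_left h1 hδ
  have hr : (δ + ε * T') * Real.exp (L * T')
      = δ * Real.exp (L * T') + ε * T' * Real.exp (L * T') := by ring
  linarith


open Set Real

/-- Backward-in-time Grönwall comparison of an exact and an approximate solution. -/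
lemma stmt4_gronwall {b B : ℝ → ℝ → ℝ} {L ε δ r m : ℝ} (hL : 0 < L) (hε : 0 ≤ ε) (hδ : 0 ≤ δ)
    (hrm : r ≤ m)
    (hlip : ∀ s ∈ Set.Icc r m, ∀ y ∈ Set.Icc (0:ℝ) 1, ∀ z ∈ Set.Icc (0:ℝ) 1,
      |b s y - b s z| ≤ L * |y - z|)
    {u v : ℝ → ℝ}
    (hu : ∀ s ∈ Set.Icc r m, HasDerivWithinAt u (b s (u s)) (Set.Icc r m) s)
    (hum : ∀ s ∈ Set.Icc r m, u s ∈ Set.Icc (0:ℝ) 1)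
    (hv : ∀ s ∈ Set.Icc r m, HasDerivWithinAt v (B s (v s)) (Set.Icc r m) s)
    (hvm : ∀ s ∈ Set.Icc r m, v s ∈ Set.Icc (0:ℝ) 1)
    (hB : ∀ s ∈ Set.Icc r m, |B s (v s) - b s (v s)| ≤ ε)
    (hend : |u m - v m| ≤ δ) :
    ∀ s ∈ Set.Icc r m, |u s - v s| ≤ (δ + ε * (m - r)) * Real.exp (L * (m - r)) := by
  set K : NNReal := ⟨L, hL.le⟩ with hK
  have hKL : (K : ℝ) = L := rfl
  set cl : ℝ → ℝ := fun σ => max r (min m (r + m - σ)) with hcl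
  have hcl_mem : ∀ σ, cl σ ∈ Set.Icc r m := fun σ =>
    ⟨le_max_left _ _, max_le hrm (min_le_left _ _)⟩
  have hcl_eq : ∀ σ ∈ Set.Icc r m, cl σ = r + m - σ := by
    intro σ hσ
    have h1 : r + m - σ ≤ m := by linarith [hσ.1]
    have h2 : r ≤ r + m - σ := by linarith [hσ.2]
    simp [hcl, min_eq_right h1, max_eq_right h2]
  have hπ_mem : ∀ σ ∈ Set.Icc r m, r + m - σ ∈ Set.Icc r m := by
    intro σ hσ; exact ⟨by linarith [hσ.2], by linarith [hσ.1]⟩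
  set W : ℝ → ℝ → ℝ := fun σ y => -(b (cl σ) y) with hW
  have hWlip : ∀ σ, LipschitzOnWith K (W σ) (Set.Icc (0:ℝ) 1) := by
    intro σ
    apply LipschitzOnWith.of_dist_le_mul
    intro y hy z hz
    rw [Real.dist_eq, Real.dist_eq, hKL]
    have h := hlip (cl σ) (hcl_mem σ) y hy z hz
    have heq : W σ y - W σ z = -(b (cl σ) y - b (cl σ) z) := by rw [hW]; ring
    rw [heq, abs_neg]; exact h
  have hmaps : Set.MapsTo (fun τ => r + m - τ) (Set.Icc r m) (Set.Icc r m) :=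
    fun τ hτ => hπ_mem τ hτ
  have hin : ∀ σ, HasDerivWithinAt (fun τ : ℝ => r + m - τ) (-1) (Set.Icc r m) σ := by
    intro σ
    simpa using (hasDerivWithinAt_id σ (Set.Icc r m)).const_sub (r + m)
  have hfD : ∀ σ ∈ Set.Icc r m, HasDerivWithinAt (fun τ => u (r + m - τ))
      (-(b (r + m - σ) (u (r + m - σ)))) (Set.Icc r m) σ := by
    intro σ hσ
    have h2 := HasDerivWithinAt.comp σ (hu _ (hπ_mem σ hσ)) (hin σ) hmaps
    simpa [Function.comp_def, mul_neg_one] using h2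
  have hgD : ∀ σ ∈ Set.Icc r m, HasDerivWithinAt (fun τ => v (r + m - τ))
      (-(B (r + m - σ) (v (r + m - σ)))) (Set.Icc r m) σ := by
    intro σ hσ
    have h2 := HasDerivWithinAt.comp σ (hv _ (hπ_mem σ hσ)) (hin σ) hmaps
    simpa [Function.comp_def, mul_neg_one] using h2
  have hcon := dist_le_of_approx_trajectories_ODE_of_mem (v := W)
    (s := fun _ => Set.Icc (0:ℝ) 1) (K := K) (εf := 0) (εg := ε) (δ := δ)
    (f := fun τ => u (r + m - τ)) (f' := fun σ => -(b (r + m - σ) (u (r + m - σ))))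
    (g := fun τ => v (r + m - τ)) (g' := fun σ => -(B (r + m - σ) (v (r + m - σ))))
    (a := r) (b := m) (fun σ _ => hWlip σ)
    (fun σ hσ => (hfD σ hσ).continuousWithinAt)
    (fun σ hσ => (hfD σ (Set.Ico_subset_Icc_self hσ)).mono_of_mem_nhdsWithin
      (Icc_mem_nhdsGE_of_mem hσ))
    (fun σ hσ => by
      rw [hW]; simp only []
      rw [hcl_eq σ (Set.Ico_subset_Icc_self hσ), dist_self])
    (fun σ hσ => hum _ (hπ_mem σ (Set.Ico_subset_Icc_self hσ)))
    (fun σ hσ => (hgD σ hσ).continuousWithinAt)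
    (fun σ hσ => (hgD σ (Set.Ico_subset_Icc_self hσ)).mono_of_mem_nhdsWithin
      (Icc_mem_nhdsGE_of_mem hσ))
    (fun σ hσ => by
      rw [hW]; simp only []
      rw [hcl_eq σ (Set.Ico_subset_Icc_self hσ), Real.dist_eq]
      have h1 : r + m - σ ∈ Set.Icc r m := hπ_mem σ (Set.Ico_subset_Icc_self hσ)
      have := hB _ h1
      rw [show -B (r + m - σ) (v (r + m - σ)) - -b (r + m - σ) (v (r + m - σ))
        = -(B (r + m - σ) (v (r + m - σ)) - b (r + m - σ) (v (r + m - σ))) by ring, abs_neg]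
      exact this)
    (fun σ hσ => hvm _ (hπ_mem σ (Set.Ico_subset_Icc_self hσ)))
    (by
      show dist (u (r + m - r)) (v (r + m - r)) ≤ δ
      rw [show r + m - r = m by ring, Real.dist_eq]
      exact hend)
  intro s hs
  have hσ : r + m - s ∈ Set.Icc r m := hπ_mem s hs
  have hc := hcon _ hσ
  rw [Real.dist_eq] at hc
  have hc2 : |u s - v s| ≤ gronwallBound δ L ε (m - s) := by
    simpa [show r + m - (r + m - s) = s by ring, show r + m - s - r = m - s by ring, hKL]
      using hc
  exact hc2.trans (stmt4_gb_le hδ hε hL (by linarith [hs.2]) (by linarith [hs.1]))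

/-- Continuity of the backward entrance time with respect to the vector field and
the base point, away from the characteristic issuing from `(0,0)`:
if `aₙ → a` uniformly, with uniform Lipschitz bound in `x` and uniform lower bound
`c > 0`, and `(tₙ,xₙ) → (t,x)` with `(t,x)` not on the characteristic through `(0,0)`,
then `eₙ(tₙ,xₙ) → e(t,x)`. -/
theorem stmt_4 (T L c : ℝ) (hT : 0 < T) (hL : 0 < L) (hc : 0 < c)
    (a : ℝ → ℝ → ℝ) (A : ℕ → ℝ → ℝ → ℝ)
    (φ : ℝ → ℝ → ℝ → ℝ) (e f : ℝ → ℝ → ℝ)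
    (Φ : ℕ → ℝ → ℝ → ℝ → ℝ) (E F : ℕ → ℝ → ℝ → ℝ)
    -- regularity and bounds for `a` and the `aₙ`
    (ha_cont : ContinuousOn (fun p : ℝ × ℝ => a p.1 p.2) (Set.Icc 0 T ×ˢ Set.Icc 0 1))
    (hA_cont : ∀ n, ContinuousOn (fun p : ℝ × ℝ => A n p.1 p.2) (Set.Icc 0 T ×ˢ Set.Icc 0 1))
    (ha_pos : ∀ t ∈ Set.Icc (0:ℝ) T, ∀ x ∈ Set.Icc (0:ℝ) 1, c ≤ a t x)
    (hA_pos : ∀ n, ∀ t ∈ Set.Icc (0:ℝ) T, ∀ x ∈ Set.Icc (0:ℝ) 1, c ≤ A n t x)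
    (ha_lip : ∀ t ∈ Set.Icc (0:ℝ) T, ∀ x ∈ Set.Icc (0:ℝ) 1, ∀ y ∈ Set.Icc (0:ℝ) 1,
      |a t x - a t y| ≤ L * |x - y|)
    (hA_lip : ∀ n, ∀ t ∈ Set.Icc (0:ℝ) T, ∀ x ∈ Set.Icc (0:ℝ) 1, ∀ y ∈ Set.Icc (0:ℝ) 1,
      |A n t x - A n t y| ≤ L * |x - y|)
    -- uniform convergence `aₙ → a` on `[0,T]×[0,1]`
    (hconv : ∀ ε > (0:ℝ), ∃ N : ℕ, ∀ n ≥ N, ∀ t ∈ Set.Icc (0:ℝ) T, ∀ x ∈ Set.Icc (0:ℝ) 1,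
      |A n t x - a t x| ≤ ε)
    -- `φ` is the flow of `a`, defined on `[e(t,x), f(t,x)] ⊆ [0,T]`
    (hef : ∀ t ∈ Set.Icc (0:ℝ) T, ∀ x ∈ Set.Icc (0:ℝ) 1,
      0 ≤ e t x ∧ e t x ≤ t ∧ t ≤ f t x ∧ f t x ≤ T)
    (hφ_init : ∀ t ∈ Set.Icc (0:ℝ) T, ∀ x ∈ Set.Icc (0:ℝ) 1, φ t t x = x)
    (hφ_mem : ∀ t ∈ Set.Icc (0:ℝ) T, ∀ x ∈ Set.Icc (0:ℝ) 1,
      ∀ s ∈ Set.Icc (e t x) (f t x), φ s t x ∈ Set.Icc (0:ℝ) 1)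
    (hφ_ode : ∀ t ∈ Set.Icc (0:ℝ) T, ∀ x ∈ Set.Icc (0:ℝ) 1,
      ∀ s ∈ Set.Icc (e t x) (f t x),
        HasDerivWithinAt (fun σ => φ σ t x) (a s (φ s t x)) (Set.Icc (e t x) (f t x)) s)
    (he_exit : ∀ t ∈ Set.Icc (0:ℝ) T, ∀ x ∈ Set.Icc (0:ℝ) 1,
      0 < e t x → φ (e t x) t x = 0)
    (hf_exit : ∀ t ∈ Set.Icc (0:ℝ) T, ∀ x ∈ Set.Icc (0:ℝ) 1,
      f t x < T → φ (f t x) t x = 1)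
    -- `Φ n` is the flow of `A n`, defined on `[E n (t,x), F n (t,x)] ⊆ [0,T]`
    (hEF : ∀ n, ∀ t ∈ Set.Icc (0:ℝ) T, ∀ x ∈ Set.Icc (0:ℝ) 1,
      0 ≤ E n t x ∧ E n t x ≤ t ∧ t ≤ F n t x ∧ F n t x ≤ T)
    (hΦ_init : ∀ n, ∀ t ∈ Set.Icc (0:ℝ) T, ∀ x ∈ Set.Icc (0:ℝ) 1, Φ n t t x = x)
    (hΦ_mem : ∀ n, ∀ t ∈ Set.Icc (0:ℝ) T, ∀ x ∈ Set.Icc (0:ℝ) 1,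
      ∀ s ∈ Set.Icc (E n t x) (F n t x), Φ n s t x ∈ Set.Icc (0:ℝ) 1)
    (hΦ_ode : ∀ n, ∀ t ∈ Set.Icc (0:ℝ) T, ∀ x ∈ Set.Icc (0:ℝ) 1,
      ∀ s ∈ Set.Icc (E n t x) (F n t x),
        HasDerivWithinAt (fun σ => Φ n σ t x) (A n s (Φ n s t x))
          (Set.Icc (E n t x) (F n t x)) s)
    (hE_exit : ∀ n, ∀ t ∈ Set.Icc (0:ℝ) T, ∀ x ∈ Set.Icc (0:ℝ) 1,
      0 < E n t x → Φ n (E n t x) t x = 0)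
    (hF_exit : ∀ n, ∀ t ∈ Set.Icc (0:ℝ) T, ∀ x ∈ Set.Icc (0:ℝ) 1,
      F n t x < T → Φ n (F n t x) t x = 1)
    -- the base points
    (t x : ℝ) (ht : t ∈ Set.Icc (0:ℝ) T) (hx : x ∈ Set.Icc (0:ℝ) 1)
    (tseq xseq : ℕ → ℝ)
    (htseq : ∀ n, tseq n ∈ Set.Icc (0:ℝ) T) (hxseq : ∀ n, xseq n ∈ Set.Icc (0:ℝ) 1)
    (hlim : Filter.Tendsto (fun n => (tseq n, xseq n)) Filter.atTop (nhds (t, x)))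
    -- `(t,x)` is not on the characteristic issuing from `(0,0)`
    (hP : ¬ ∃ s ∈ Set.Icc (0:ℝ) (f 0 0), t = s ∧ x = φ s 0 0) :
    Filter.Tendsto (fun n => E n (tseq n) (xseq n)) Filter.atTop (nhds (e t x)) := by
  have h0T : (0:ℝ) ∈ Set.Icc (0:ℝ) T := ⟨le_rfl, hT.le⟩
  have h01 : (0:ℝ) ∈ Set.Icc (0:ℝ) 1 := ⟨le_rfl, zero_le_one⟩
  obtain ⟨he0, het, htf, hfT⟩ := hef t ht x hx
  obtain ⟨M, hMb⟩ := (isCompact_Icc.prod isCompact_Icc).exists_bound_of_continuousOn ha_cont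
  have haM : ∀ s ∈ Set.Icc (0:ℝ) T, ∀ y ∈ Set.Icc (0:ℝ) 1, a s y ≤ M := by
    intro s hs y hy
    have h := hMb (s, y) (Set.mk_mem_prod hs hy)
    rw [Real.norm_eq_abs] at h
    exact (le_abs_self _).trans h
  have hcM : c ≤ M := (ha_pos 0 h0T 0 h01).trans (haM 0 h0T 0 h01)
  obtain ⟨N1, hN1⟩ := hconv 1 one_pos
  have hAM : ∀ n ≥ N1, ∀ s ∈ Set.Icc (0:ℝ) T, ∀ y ∈ Set.Icc (0:ℝ) 1, A n s y ≤ M + 1 := by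
    intro n hn s hs y hy
    have h1 := abs_le.1 (hN1 n hn s hs y hy)
    have h2 := haM s hs y hy
    linarith [h1.1, h1.2]
  have htt : Filter.Tendsto tseq Filter.atTop (nhds t) := by
    have h := (Continuous.tendsto continuous_fst (t, x)).comp hlim
    simpa [Function.comp_def] using h
  have hxx : Filter.Tendsto xseq Filter.atTop (nhds x) := by
    have h := (Continuous.tendsto continuous_snd (t, x)).comp hlim
    simpa [Function.comp_def] using h
  rcases eq_or_lt_of_le ht.1 with ht0 | htpos
  · -- Case t = 0
    have he00 : e t x = 0 := le_antisymm (het.trans ht0.symm.le) he0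
    rw [he00]
    refine tendsto_of_tendsto_of_tendsto_of_le_of_le (g := fun _ => (0:ℝ)) (h := tseq)
      tendsto_const_nhds (ht0 ▸ htt)
      (fun n => (hEF n (tseq n) (htseq n) (xseq n) (hxseq n)).1)
      (fun n => (hEF n (tseq n) (htseq n) (xseq n) (hxseq n)).2.1)
  · rcases eq_or_lt_of_le het with het0 | hetlt
    · -- Case e t x = t (then x = 0)
      have hx0 : x = 0 := by
        have h1 := he_exit t ht x hx (by rw [het0]; exact htpos)
        rw [het0, hφ_init t ht x hx] at h1
        exact h1
      rw [het0]
      have hlow : Filter.Tendsto (fun n => tseq n - xseq n / c) Filter.atTop (nhds t) := by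
        have h := htt.sub (hxx.div_const c)
        rw [hx0] at h
        simpa using h
      refine tendsto_of_tendsto_of_tendsto_of_le_of_le' hlow htt ?_
        (Filter.Eventually.of_forall fun n => (hEF n (tseq n) (htseq n) (xseq n) (hxseq n)).2.1)
      refine Filter.eventually_atTop.2 ⟨N1, fun n hn => ?_⟩
      obtain ⟨hEn0, hEntn, htnFn, hFnT⟩ := hEF n (tseq n) (htseq n) (xseq n) (hxseq n)
      have hvsub : Set.Icc (E n (tseq n) (xseq n)) (F n (tseq n) (xseq n)) ⊆ Set.Icc (0:ℝ) T :=
        Set.Icc_subset_Icc hEn0 hFnT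
      have hv_ode := hΦ_ode n (tseq n) (htseq n) (xseq n) (hxseq n)
      have hv_mem := hΦ_mem n (tseq n) (htseq n) (xseq n) (hxseq n)
      have hvc : ∀ s ∈ Set.Icc (E n (tseq n) (xseq n)) (F n (tseq n) (xseq n)),
          c ≤ A n s (Φ n s (tseq n) (xseq n)) :=
        fun s hs => hA_pos n s (hvsub hs) _ (hv_mem s hs)
      have hvM : ∀ s ∈ Set.Icc (E n (tseq n) (xseq n)) (F n (tseq n) (xseq n)),
          A n s (Φ n s (tseq n) (xseq n)) ≤ M + 1 :=
        fun s hs => hAM n hn s (hvsub hs) _ (hv_mem s hs)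
      have hsp := (stmt4_speed hc.le hv_ode hvc hvM
        (r := E n (tseq n) (xseq n)) (s := tseq n)
        ⟨le_rfl, hEntn.trans htnFn⟩ ⟨hEntn, htnFn⟩ hEntn).1
      rw [hΦ_init n (tseq n) (htseq n) (xseq n) (hxseq n)] at hsp
      have hv0 : 0 ≤ Φ n (E n (tseq n) (xseq n)) (tseq n) (xseq n) :=
        (hv_mem _ ⟨le_rfl, hEntn.trans htnFn⟩).1
      have hdiv : tseq n - E n (tseq n) (xseq n) ≤ xseq n / c := by
        rw [le_div_iff₀ hc]
        nlinarith
      linarith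
    · -- Main case: e t x < t, 0 < t
      have hu_ode := hφ_ode t ht x hx
      have hu_mem := hφ_mem t ht x hx
      have husub : Set.Icc (e t x) (f t x) ⊆ Set.Icc (0:ℝ) T := Set.Icc_subset_Icc he0 hfT
      have huc : ∀ s ∈ Set.Icc (e t x) (f t x), c ≤ a s (φ s t x) :=
        fun s hs => ha_pos s (husub hs) _ (hu_mem s hs)
      have huM : ∀ s ∈ Set.Icc (e t x) (f t x), a s (φ s t x) ≤ M :=
        fun s hs => haM s (husub hs) _ (hu_mem s hs)
      have he0mem : e t x ∈ Set.Icc (e t x) (f t x) := ⟨le_rfl, het.trans htf⟩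
      have htmemu : t ∈ Set.Icc (e t x) (f t x) := ⟨het, htf⟩
      have hxpos : 0 < x := by
        have hsp := (stmt4_speed hc.le hu_ode huc huM he0mem htmemu het).1
        rw [hφ_init t ht x hx] at hsp
        have h2 : 0 ≤ φ (e t x) t x := (hu_mem _ he0mem).1
        have h3 := mul_pos hc (sub_pos.2 hetlt)
        linarith
      rw [Metric.tendsto_atTop]
      intro η hη
      obtain ⟨M', hM'd⟩ : ∃ y : ℝ, y = M + 1 := ⟨_, rfl⟩
      have hM'pos : 0 < M' := by rw [hM'd]; linarith
      obtain ⟨CC, hCCd⟩ : ∃ y : ℝ, y = (M' + 1 + T) * Real.exp (L * T) := ⟨_, rfl⟩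
      have hCC : 0 < CC := by
        rw [hCCd]
        exact mul_pos (by linarith) (Real.exp_pos _)
      obtain ⟨ρ, hρd⟩ : ∃ y : ℝ, y = min (min (c * η / (4 * CC)) (x / (4 * CC)))
        (min ((t - e t x) / 2) (x / (4 * (M' + 1)))) := ⟨_, rfl⟩
      have hρpos : 0 < ρ := by
        rw [hρd]
        refine lt_min (lt_min (by positivity) (by positivity)) (lt_min (by linarith) (by positivity))
      have hρ1 : ρ * CC ≤ c * η / 4 := by
        have ha1 : ρ ≤ c * η / (4 * CC) := by
          rw [hρd]; exact (min_le_left _ _).trans (min_le_left _ _)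
        have h2 : c * η / (4 * CC) * CC = c * η / 4 := by field_simp
        have h3 := mul_le_mul_of_nonneg_right ha1 hCC.le
        linarith
      have hρ2 : ρ * CC ≤ x / 4 := by
        have ha1 : ρ ≤ x / (4 * CC) := by
          rw [hρd]; exact (min_le_left _ _).trans (min_le_right _ _)
        have h2 : x / (4 * CC) * CC = x / 4 := by field_simp
        have h3 := mul_le_mul_of_nonneg_right ha1 hCC.le
        linarith
      have hρ3 : ρ ≤ (t - e t x) / 2 := by
        rw [hρd]; exact (min_le_right _ _).trans (min_le_left _ _)
      have hρ4 : ρ * (M' + 1) ≤ x / 4 := by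
        have ha1 : ρ ≤ x / (4 * (M' + 1)) := by
          rw [hρd]; exact (min_le_right _ _).trans (min_le_right _ _)
        have h2 : x / (4 * (M' + 1)) * (M' + 1) = x / 4 := by
          field_simp
        have h3 := mul_le_mul_of_nonneg_right ha1 (by linarith : (0:ℝ) ≤ M' + 1)
        linarith
      have hρx : ρ ≤ x / 4 := by
        have h1 : ρ * 1 ≤ ρ * (M' + 1) := mul_le_mul_of_nonneg_left (by linarith) hρpos.le
        rw [mul_one] at h1
        linarith
      obtain ⟨N2, hN2⟩ := hconv ρ hρpos
      obtain ⟨N3, hN3⟩ := Metric.tendsto_atTop.1 htt ρ hρpos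
      obtain ⟨N4, hN4⟩ := Metric.tendsto_atTop.1 hxx ρ hρpos
      refine ⟨max (max N1 N2) (max N3 N4), fun n hn => ?_⟩
      have hn1 : N1 ≤ n := le_trans (le_trans (le_max_left _ _) (le_max_left _ _)) hn
      have hn2 : N2 ≤ n := le_trans (le_trans (le_max_right _ _) (le_max_left _ _)) hn
      have hn3 : N3 ≤ n := le_trans (le_trans (le_max_left _ _) (le_max_right _ _)) hn
      have hn4 : N4 ≤ n := le_trans (le_trans (le_max_right _ _) (le_max_right _ _)) hn
      have htn : |tseq n - t| ≤ ρ := by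
        have h := hN3 n hn3; rw [Real.dist_eq] at h; exact h.le
      have hxn : |xseq n - x| ≤ ρ := by
        have h := hN4 n hn4; rw [Real.dist_eq] at h; exact h.le
      have htn' := abs_le.1 htn
      have hxn' := abs_le.1 hxn
      obtain ⟨hEn0, hEntn, htnFn, hFnT⟩ := hEF n (tseq n) (htseq n) (xseq n) (hxseq n)
      have hvsub : Set.Icc (E n (tseq n) (xseq n)) (F n (tseq n) (xseq n)) ⊆ Set.Icc (0:ℝ) T :=
        Set.Icc_subset_Icc hEn0 hFnT
      have hv_ode := hΦ_ode n (tseq n) (htseq n) (xseq n) (hxseq n)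
      have hv_mem := hΦ_mem n (tseq n) (htseq n) (xseq n) (hxseq n)
      have hvinit := hΦ_init n (tseq n) (htseq n) (xseq n) (hxseq n)
      have hvc : ∀ s ∈ Set.Icc (E n (tseq n) (xseq n)) (F n (tseq n) (xseq n)),
          c ≤ A n s (Φ n s (tseq n) (xseq n)) :=
        fun s hs => hA_pos n s (hvsub hs) _ (hv_mem s hs)
      have hvM : ∀ s ∈ Set.Icc (E n (tseq n) (xseq n)) (F n (tseq n) (xseq n)),
          A n s (Φ n s (tseq n) (xseq n)) ≤ M' :=
        fun s hs => by rw [hM'd]; exact hAM n hn1 s (hvsub hs) _ (hv_mem s hs)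
      have htnmemv : tseq n ∈ Set.Icc (E n (tseq n) (xseq n)) (F n (tseq n) (xseq n)) :=
        ⟨hEntn, htnFn⟩
      have hEmemv : E n (tseq n) (xseq n)
          ∈ Set.Icc (E n (tseq n) (xseq n)) (F n (tseq n) (xseq n)) :=
        ⟨le_rfl, hEntn.trans htnFn⟩
      -- Step 1 : E n ≤ t
      have hEt : E n (tseq n) (xseq n) ≤ t := by
        by_contra hcon
        push_neg at hcon
        have hEpos : 0 < E n (tseq n) (xseq n) := htpos.trans hcon
        have hvE := hE_exit n (tseq n) (htseq n) (xseq n) (hxseq n) hEpos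
        have hsp := (stmt4_speed hc.le hv_ode hvc hvM hEmemv htnmemv hEntn).2
        rw [hvinit, hvE] at hsp
        have hm1 : M' * (tseq n - E n (tseq n) (xseq n)) ≤ M' * ρ :=
          mul_le_mul_of_nonneg_left (by linarith) hM'pos.le
        have hm2 : M' * ρ + ρ = ρ * (M' + 1) := by ring
        linarith [htn'.1, htn'.2, hxn'.1, hρ4, hxpos]
      -- Step 2 : e t x ≤ tseq n
      have he0tn : e t x ≤ tseq n := by linarith
      -- the comparison interval
      obtain ⟨mm, hmmd⟩ : ∃ y : ℝ, y = min t (tseq n) := ⟨_, rfl⟩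
      obtain ⟨ss, hssd⟩ : ∃ y : ℝ, y = max (e t x) (E n (tseq n) (xseq n)) := ⟨_, rfl⟩
      have hr_le_m : ss ≤ mm := by
        rw [hmmd, hssd]; exact max_le (le_min het he0tn) (le_min hEt hEntn)
      have hsubu : Set.Icc ss mm ⊆ Set.Icc (e t x) (f t x) := by
        rw [hmmd, hssd]
        exact Set.Icc_subset_Icc (le_max_left _ _) ((min_le_left _ _).trans htf)
      have hsubv : Set.Icc ss mm
          ⊆ Set.Icc (E n (tseq n) (xseq n)) (F n (tseq n) (xseq n)) := by
        rw [hmmd, hssd]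
        exact Set.Icc_subset_Icc (le_max_right _ _) ((min_le_right _ _).trans htnFn)
      have hsub0T : Set.Icc ss mm ⊆ Set.Icc (0:ℝ) T :=
        fun s hs => husub (hsubu hs)
      -- anchor estimate at mm
      have hanchor : |φ mm t x - Φ n mm (tseq n) (xseq n)| ≤ M' * ρ + ρ := by
        rcases le_total t (tseq n) with hcmp | hcmp
        · have hmm : mm = t := by rw [hmmd]; exact min_eq_left hcmp
          rw [hmm, hφ_init t ht x hx]
          have htmemv : t ∈ Set.Icc (E n (tseq n) (xseq n)) (F n (tseq n) (xseq n)) :=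
            ⟨hEt, hcmp.trans htnFn⟩
          have hsp := stmt4_speed hc.le hv_ode hvc hvM htmemv htnmemv hcmp
          rw [hvinit] at hsp
          have hm1 : M' * (tseq n - t) ≤ M' * ρ :=
            mul_le_mul_of_nonneg_left (by linarith) hM'pos.le
          have hm2 : 0 ≤ c * (tseq n - t) := mul_nonneg hc.le (by linarith)
          have hm3 : 0 ≤ M' * ρ := by positivity
          rw [abs_le]
          constructor <;> linarith [hsp.1, hsp.2, hxn'.1, hxn'.2]
        · have hmm : mm = tseq n := by rw [hmmd]; exact min_eq_right hcmp
          rw [hmm]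
          have htnmemu : tseq n ∈ Set.Icc (e t x) (f t x) := ⟨he0tn, hcmp.trans htf⟩
          have hsp := stmt4_speed hc.le hu_ode huc huM htnmemu htmemu hcmp
          rw [hφ_init t ht x hx] at hsp
          have hm1 : M * (t - tseq n) ≤ M * ρ :=
            mul_le_mul_of_nonneg_left (by linarith) (by linarith)
          have hm2 : 0 ≤ c * (t - tseq n) := mul_nonneg hc.le (by linarith)
          have hm4 : M ≤ M' := by rw [hM'd]; linarith
          have hm5 : M * ρ ≤ M' * ρ := mul_le_mul_of_nonneg_right hm4 hρpos.le
          have hm3 : 0 ≤ M * ρ := mul_nonneg (by linarith) hρpos.le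
          rw [abs_le]
          constructor <;> linarith [hsp.1, hsp.2, hxn'.1, hxn'.2]
      -- Gronwall comparison on [ss, mm]
      have hGr := stmt4_gronwall (b := a) (B := A n) (L := L) (ε := ρ) (δ := M' * ρ + ρ)
        (r := ss) (m := mm) hL hρpos.le (by positivity) hr_le_m
        (fun s hs y hy z hz => ha_lip s (hsub0T hs) y hy z hz)
        (fun s hs => (hu_ode s (hsubu hs)).mono hsubu)
        (fun s hs => hu_mem s (hsubu hs))
        (fun s hs => (hv_ode s (hsubv hs)).mono hsubv)
        (fun s hs => hv_mem s (hsubv hs))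
        (fun s hs => hN2 n hn2 s (hsub0T hs) _ (hv_mem s (hsubv hs)))
        hanchor
      have hmmT : mm - ss ≤ T := by
        have h1 : 0 ≤ ss := by rw [hssd]; exact le_trans he0 (le_max_left _ _)
        have h2 : mm ≤ T := by rw [hmmd]; exact (min_le_left _ _).trans (htf.trans hfT)
        linarith
      have hDb : ∀ s ∈ Set.Icc ss mm, |φ s t x - Φ n s (tseq n) (xseq n)| ≤ ρ * CC := by
        intro s hs
        refine (hGr s hs).trans ?_
        have h2 : Real.exp (L * (mm - ss)) ≤ Real.exp (L * T) :=
          Real.exp_le_exp.2 (mul_le_mul_of_nonneg_left hmmT hL.le)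
        have h3 : M' * ρ + ρ + ρ * (mm - ss) ≤ ρ * (M' + 1 + T) := by
          have hh := mul_le_mul_of_nonneg_left hmmT hρpos.le
          have hh2 : ρ * (M' + 1 + T) = M' * ρ + ρ + ρ * T := by ring
          linarith
        have h4 : (M' * ρ + ρ + ρ * (mm - ss)) * Real.exp (L * (mm - ss))
            ≤ ρ * (M' + 1 + T) * Real.exp (L * T) :=
          mul_le_mul h3 h2 (Real.exp_pos _).le (by positivity)
        rw [hCCd]
        have h5 : ρ * (M' + 1 + T) * Real.exp (L * T)
            = ρ * ((M' + 1 + T) * Real.exp (L * T)) := by ring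
        linarith
      -- upper bound
      have hup : E n (tseq n) (xseq n) ≤ e t x + η / 2 := by
        rcases le_or_gt (E n (tseq n) (xseq n)) (e t x) with h | h
        · linarith
        · have hEpos : 0 < E n (tseq n) (xseq n) := lt_of_le_of_lt he0 h
          have hvE := hE_exit n (tseq n) (htseq n) (xseq n) (hxseq n) hEpos
          have hEmem : E n (tseq n) (xseq n) ∈ Set.Icc ss mm := by
            rw [hmmd, hssd]; exact ⟨max_le h.le le_rfl, le_min hEt hEntn⟩
          have hD := hDb _ hEmem
          rw [hvE, sub_zero] at hD
          have hEmemu : E n (tseq n) (xseq n) ∈ Set.Icc (e t x) (f t x) :=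
            ⟨h.le, hEt.trans htf⟩
          have hsp := (stmt4_speed hc.le hu_ode huc huM he0mem hEmemu h.le).1
          have hue0 : 0 ≤ φ (e t x) t x := (hu_mem _ he0mem).1
          have habs := abs_le.1 hD
          have hfin : c * (E n (tseq n) (xseq n) - e t x) ≤ c * (η / 4) := by linarith
          have := le_of_mul_le_mul_left hfin hc
          linarith
      -- lower bound
      have hlo : e t x - η / 2 ≤ E n (tseq n) (xseq n) := by
        rcases le_or_gt (e t x) (E n (tseq n) (xseq n)) with h | h
        · linarith
        · have he0pos : 0 < e t x := lt_of_le_of_lt hEn0 h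
          have huE := he_exit t ht x hx he0pos
          have he0mem' : e t x ∈ Set.Icc ss mm := by
            rw [hmmd, hssd]; exact ⟨max_le le_rfl h.le, le_min het he0tn⟩
          have hD := hDb _ he0mem'
          rw [huE, zero_sub, abs_neg] at hD
          have he0memv : e t x ∈ Set.Icc (E n (tseq n) (xseq n)) (F n (tseq n) (xseq n)) :=
            ⟨h.le, he0tn.trans htnFn⟩
          have hsp := (stmt4_speed hc.le hv_ode hvc hvM hEmemv he0memv h.le).1
          have hvEn0 : 0 ≤ Φ n (E n (tseq n) (xseq n)) (tseq n) (xseq n) :=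
            (hv_mem _ hEmemv).1
          have habs := abs_le.1 hD
          have hfin : c * (e t x - E n (tseq n) (xseq n)) ≤ c * (η / 4) := by linarith
          have := le_of_mul_le_mul_left hfin hc
          linarith
      rw [Real.dist_eq, abs_lt]
      constructor <;> linarith
end

section
/- Let a be continuous on [0,T]×[0,1] with ∂_x a ∈ L^∞ and a ≥ c > 0, let y_l and y₀ be uniformly Lipschitz with constants L_l and L₀ respectively and y_l(0) = y₀(0). Then the function y defined by y(t,x) = y_l(e(t,x)) on J and y(t,x) = y₀(φ(0,t,x)) on I ∪ P is Lipschitz continuous on [0,T]×[0,1] with Lipschitz constant M = max(L_l/c, L₀)·max(1, ‖a‖_{C⁰})·e^{LT}, where L = ‖∂_x a‖_{L^∞}. -/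
open Set Real

/-- Speed bounds along a trajectory of the ODE. -/
lemma speed_aux {a : ℝ → ℝ → ℝ} {c Ma T : ℝ}
    (ha_pos : ∀ t ∈ Set.Icc (0:ℝ) T, ∀ x ∈ Set.Icc (0:ℝ) 1, c ≤ a t x)
    (ha_bdd : ∀ t ∈ Set.Icc (0:ℝ) T, ∀ x ∈ Set.Icc (0:ℝ) 1, |a t x| ≤ Ma)
    {ψ : ℝ → ℝ} {α β : ℝ} (hα : 0 ≤ α) (hαβ : α ≤ β) (hβ : β ≤ T)
    (hd : ∀ s ∈ Set.Icc α β, HasDerivWithinAt ψ (a s (ψ s)) (Set.Icc α β) s)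
    (hm : ∀ s ∈ Set.Icc α β, ψ s ∈ Set.Icc (0:ℝ) 1) :
    c * (β - α) ≤ ψ β - ψ α ∧ ψ β - ψ α ≤ Ma * (β - α) := by
  have hmemT : ∀ s ∈ Set.Icc α β, s ∈ Set.Icc (0:ℝ) T := fun s hs =>
    ⟨hα.trans hs.1, hs.2.trans hβ⟩
  have hαm : α ∈ Set.Icc α β := ⟨le_refl _, hαβ⟩
  have hβm : β ∈ Set.Icc α β := ⟨hαβ, le_refl _⟩
  have hupper : ψ β - ψ α ≤ Ma * (β - α) := by
    have := Convex.norm_image_sub_le_of_norm_hasDerivWithin_le hd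
      (fun s hs => ha_bdd s (hmemT s hs) (ψ s) (hm s hs)) (convex_Icc α β) hαm hβm
    rw [Real.norm_eq_abs, Real.norm_eq_abs,
      abs_of_nonneg (show (0:ℝ) ≤ β - α by linarith)] at this
    exact (abs_le.mp this).2
  refine ⟨?_, hupper⟩
  have hd' : ∀ s ∈ Set.Icc α β,
      HasDerivWithinAt (fun s => Ma * s - ψ s) (Ma - a s (ψ s)) (Set.Icc α β) s := by
    intro s hs
    exact (((hasDerivWithinAt_id s (Set.Icc α β)).const_mul Ma).sub (hd s hs)).congr_deriv (by ring)
  have hbd' : ∀ s ∈ Set.Icc α β, ‖Ma - a s (ψ s)‖ ≤ Ma - c := by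
    intro s hs
    have h1 := ha_pos s (hmemT s hs) (ψ s) (hm s hs)
    have h2 := ha_bdd s (hmemT s hs) (ψ s) (hm s hs)
    rw [Real.norm_eq_abs, abs_le]
    rw [abs_le] at h2
    constructor <;> linarith
  have := Convex.norm_image_sub_le_of_norm_hasDerivWithin_le hd' hbd' (convex_Icc α β) hαm hβm
  rw [Real.norm_eq_abs, Real.norm_eq_abs,
    abs_of_nonneg (show (0:ℝ) ≤ β - α by linarith)] at this
  have h2 := (abs_le.mp this).2
  nlinarith [h2]

/-- Backward Grönwall comparison for two trajectories. -/
lemma gron_aux {a : ℝ → ℝ → ℝ} {L T : ℝ} (hL : 0 < L)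
    (ha_lip : ∀ t ∈ Set.Icc (0:ℝ) T, ∀ x ∈ Set.Icc (0:ℝ) 1, ∀ x' ∈ Set.Icc (0:ℝ) 1,
      |a t x - a t x'| ≤ L * |x - x'|)
    {ψ₁ ψ₂ : ℝ → ℝ} {s₀ τ : ℝ} (hs₀ : 0 ≤ s₀) (hsτ : s₀ ≤ τ) (hτT : τ ≤ T)
    (hd₁ : ∀ s ∈ Set.Icc s₀ τ, HasDerivWithinAt ψ₁ (a s (ψ₁ s)) (Set.Icc s₀ τ) s)
    (hd₂ : ∀ s ∈ Set.Icc s₀ τ, HasDerivWithinAt ψ₂ (a s (ψ₂ s)) (Set.Icc s₀ τ) s)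
    (hm₁ : ∀ s ∈ Set.Icc s₀ τ, ψ₁ s ∈ Set.Icc (0:ℝ) 1)
    (hm₂ : ∀ s ∈ Set.Icc s₀ τ, ψ₂ s ∈ Set.Icc (0:ℝ) 1) :
    ∀ s ∈ Set.Icc s₀ τ, |ψ₁ s - ψ₂ s| ≤ Real.exp (L * (τ - s)) * |ψ₁ τ - ψ₂ τ| := by
  set B := τ - s₀ with hB
  have hB0 : 0 ≤ B := by linarith
  set f : ℝ → ℝ := fun u => ψ₁ (τ - u) - ψ₂ (τ - u) with hf
  set f' : ℝ → ℝ := fun u => (a (τ - u) (ψ₂ (τ - u)) - a (τ - u) (ψ₁ (τ - u))) with hf'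
  have hmaps : ∀ u ∈ Set.Icc (0:ℝ) B, τ - u ∈ Set.Icc s₀ τ := by
    intro u hu; exact ⟨by simp [hB] at hu ⊢; linarith [hu.2], by linarith [hu.1]⟩
  have hcont : ContinuousOn f (Set.Icc 0 B) := by
    have c1 : ContinuousOn ψ₁ (Set.Icc s₀ τ) :=
      fun s hs => (hd₁ s hs).continuousWithinAt
    have c2 : ContinuousOn ψ₂ (Set.Icc s₀ τ) :=
      fun s hs => (hd₂ s hs).continuousWithinAt
    have cg : ContinuousOn (fun u : ℝ => τ - u) (Set.Icc 0 B) :=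
      (continuous_const.sub continuous_id).continuousOn
    exact ((c1.comp cg hmaps).sub (c2.comp cg hmaps))
  have hderiv : ∀ u ∈ Set.Ico (0:ℝ) B, HasDerivWithinAt f (f' u) (Set.Ici u) u := by
    intro u hu
    have hu' : u ∈ Set.Icc (0:ℝ) B := ⟨hu.1, hu.2.le⟩
    have hg : HasDerivWithinAt (fun u : ℝ => τ - u) (-1) (Set.Icc 0 B) u :=
      ((hasDerivAt_id u).const_sub τ).hasDerivWithinAt
    have h1 : HasDerivWithinAt (fun u => ψ₁ (τ - u)) (a (τ - u) (ψ₁ (τ - u)) * (-1))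
        (Set.Icc 0 B) u :=
      (hd₁ (τ - u) (hmaps u hu')).comp u hg hmaps
    have h2 : HasDerivWithinAt (fun u => ψ₂ (τ - u)) (a (τ - u) (ψ₂ (τ - u)) * (-1))
        (Set.Icc 0 B) u :=
      (hd₂ (τ - u) (hmaps u hu')).comp u hg hmaps
    have hfd : HasDerivWithinAt f (f' u) (Set.Icc 0 B) u := by
      exact (h1.sub h2).congr_deriv (by simp only [hf']; ring)
    have hfd2 : HasDerivWithinAt f (f' u) (Set.Icc u B) u :=
      hfd.mono (Set.Icc_subset_Icc_left hu.1)
    have : Set.Icc u B = Set.Ici u ∩ Set.Iic B := (Set.Ici_inter_Iic).symm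
    rw [this] at hfd2
    exact (hasDerivWithinAt_inter (Iic_mem_nhds hu.2)).mp hfd2
  have hbound : ∀ u ∈ Set.Ico (0:ℝ) B, ‖f' u‖ ≤ L * ‖f u‖ + 0 := by
    intro u hu
    have hu' : u ∈ Set.Icc (0:ℝ) B := ⟨hu.1, hu.2.le⟩
    have ht : τ - u ∈ Set.Icc (0:ℝ) T := by
      have := hmaps u hu'; exact ⟨hs₀.trans this.1, this.2.trans hτT⟩
    have := ha_lip (τ - u) ht (ψ₂ (τ - u)) (hm₂ _ (hmaps u hu')) (ψ₁ (τ - u)) (hm₁ _ (hmaps u hu'))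
    rw [Real.norm_eq_abs, Real.norm_eq_abs]
    simp only [hf', hf]
    rw [add_zero, abs_sub_comm (ψ₁ (τ - u))]
    exact this
  have hstart : ‖f 0‖ ≤ |ψ₁ τ - ψ₂ τ| := by simp [hf]
  have := norm_le_gronwallBound_of_norm_deriv_right_le hcont hderiv hstart hbound
  intro s hs
  have hu : τ - s ∈ Set.Icc (0:ℝ) B := ⟨by linarith [hs.2], by simp [hB]; linarith [hs.1]⟩
  have h := this (τ - s) hu
  rw [gronwallBound_ε0] at h
  have : f (τ - s) = ψ₁ s - ψ₂ s := by simp [hf]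
  rw [Real.norm_eq_abs, this, sub_zero] at h
  calc |ψ₁ s - ψ₂ s| ≤ |ψ₁ τ - ψ₂ τ| * Real.exp (L * (τ - s)) := h
    _ = Real.exp (L * (τ - s)) * |ψ₁ τ - ψ₂ τ| := mul_comm _ _

set_option maxHeartbeats 1000000 in
lemma key_lip (T c L Ma Ll L0 : ℝ) (hT : 0 < T) (hc : 0 < c) (hL : 0 < L) (hMa : 0 ≤ Ma)
    (a : ℝ → ℝ → ℝ)
    (ha_pos : ∀ t ∈ Set.Icc (0:ℝ) T, ∀ x ∈ Set.Icc (0:ℝ) 1, c ≤ a t x)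
    (ha_bdd : ∀ t ∈ Set.Icc (0:ℝ) T, ∀ x ∈ Set.Icc (0:ℝ) 1, |a t x| ≤ Ma)
    (ha_lip : ∀ t ∈ Set.Icc (0:ℝ) T, ∀ x ∈ Set.Icc (0:ℝ) 1, ∀ x' ∈ Set.Icc (0:ℝ) 1,
      |a t x - a t x'| ≤ L * |x - x'|)
    (φ : ℝ → ℝ → ℝ → ℝ) (e f : ℝ → ℝ → ℝ)
    (hef : ∀ t ∈ Set.Icc (0:ℝ) T, ∀ x ∈ Set.Icc (0:ℝ) 1,
      0 ≤ e t x ∧ e t x ≤ t ∧ t ≤ f t x ∧ f t x ≤ T)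
    (hφ_init : ∀ t ∈ Set.Icc (0:ℝ) T, ∀ x ∈ Set.Icc (0:ℝ) 1, φ t t x = x)
    (hφ_mem : ∀ t ∈ Set.Icc (0:ℝ) T, ∀ x ∈ Set.Icc (0:ℝ) 1,
      ∀ s ∈ Set.Icc (e t x) (f t x), φ s t x ∈ Set.Icc (0:ℝ) 1)
    (hφ_ode : ∀ t ∈ Set.Icc (0:ℝ) T, ∀ x ∈ Set.Icc (0:ℝ) 1,
      ∀ s ∈ Set.Icc (e t x) (f t x),
        HasDerivWithinAt (fun σ => φ σ t x) (a s (φ s t x)) (Set.Icc (e t x) (f t x)) s)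
    (he_exit : ∀ t ∈ Set.Icc (0:ℝ) T, ∀ x ∈ Set.Icc (0:ℝ) 1,
      0 < e t x → φ (e t x) t x = 0)
    (yl y0 : ℝ → ℝ)
    (hyl_lip : ∀ t t' : ℝ, |yl t - yl t'| ≤ Ll * |t - t'|)
    (hy0_lip : ∀ x x' : ℝ, |y0 x - y0 x'| ≤ L0 * |x - x'|)
    (hcomp : yl 0 = y0 0)
    (y : ℝ → ℝ → ℝ)
    (hy : ∀ t ∈ Set.Icc (0:ℝ) T, ∀ x ∈ Set.Icc (0:ℝ) 1,
      y t x = if 0 < e t x then yl (e t x) else y0 (φ 0 t x))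
    (t₁ x₁ t₂ x₂ : ℝ) (ht₁ : t₁ ∈ Set.Icc (0:ℝ) T) (hx₁ : x₁ ∈ Set.Icc (0:ℝ) 1)
    (ht₂ : t₂ ∈ Set.Icc (0:ℝ) T) (hx₂ : x₂ ∈ Set.Icc (0:ℝ) 1) (h12 : t₁ ≤ t₂) :
    |y t₁ x₁ - y t₂ x₂| ≤
      max (Ll / c) L0 * max 1 Ma * Real.exp (L * T) * (|t₁ - t₂| + |x₁ - x₂|) := by
  obtain ⟨he₁0, he₁t, ht₁f, hf₁T⟩ := hef t₁ ht₁ x₁ hx₁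
  obtain ⟨he₂0, he₂t, ht₂f, hf₂T⟩ := hef t₂ ht₂ x₂ hx₂
  set e₁ := e t₁ x₁ with he₁d
  set e₂ := e t₂ x₂ with he₂d
  set f₁ := f t₁ x₁ with hf₁d
  set f₂ := f t₂ x₂ with hf₂d
  set ψ₁ : ℝ → ℝ := fun s => φ s t₁ x₁ with hψ₁d
  set ψ₂ : ℝ → ℝ := fun s => φ s t₂ x₂ with hψ₂d
  have hinit₁ : ψ₁ t₁ = x₁ := hφ_init t₁ ht₁ x₁ hx₁
  have hinit₂ : ψ₂ t₂ = x₂ := hφ_init t₂ ht₂ x₂ hx₂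
  have mem₁ : ∀ s ∈ Set.Icc e₁ f₁, ψ₁ s ∈ Set.Icc (0:ℝ) 1 := hφ_mem t₁ ht₁ x₁ hx₁
  have mem₂ : ∀ s ∈ Set.Icc e₂ f₂, ψ₂ s ∈ Set.Icc (0:ℝ) 1 := hφ_mem t₂ ht₂ x₂ hx₂
  have ode₁ : ∀ s ∈ Set.Icc e₁ f₁, HasDerivWithinAt ψ₁ (a s (ψ₁ s)) (Set.Icc e₁ f₁) s :=
    hφ_ode t₁ ht₁ x₁ hx₁
  have ode₂ : ∀ s ∈ Set.Icc e₂ f₂, HasDerivWithinAt ψ₂ (a s (ψ₂ s)) (Set.Icc e₂ f₂) s :=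
    hφ_ode t₂ ht₂ x₂ hx₂
  -- constants
  set M0 := max (Ll / c) L0 with hM0d
  set B := max 1 Ma with hBd
  set Ex := Real.exp (L * T) with hExd
  set Δx := |x₁ - x₂| with hΔxd
  have hLl0 : 0 ≤ Ll := by
    have h := hyl_lip 0 1
    simp only [zero_sub, abs_neg, abs_one, mul_one] at h
    exact le_trans (abs_nonneg _) h
  have hL00 : 0 ≤ L0 := by
    have h := hy0_lip 0 1
    simp only [zero_sub, abs_neg, abs_one, mul_one] at h
    exact le_trans (abs_nonneg _) h
  have hM0 : 0 ≤ M0 := le_trans hL00 (le_max_right _ _)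
  have hLlM : Ll ≤ c * M0 := by
    have : Ll / c ≤ M0 := le_max_left _ _
    rw [div_le_iff₀ hc] at this
    linarith
  have hL0M : L0 ≤ M0 := le_max_right _ _
  have hB1 : 1 ≤ B := le_max_left _ _
  have hMaB : Ma ≤ B := le_max_right _ _
  have hEx1 : 1 ≤ Ex := Real.one_le_exp (by positivity)
  have hcMa : c ≤ Ma := by
    have h1 := ha_pos 0 ⟨le_refl _, hT.le⟩ 0 ⟨le_refl _, zero_le_one⟩
    have h2 := ha_bdd 0 ⟨le_refl _, hT.le⟩ 0 ⟨le_refl _, zero_le_one⟩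
    have := (abs_le.mp h2).2
    linarith
  have hΔx0 : 0 ≤ Δx := abs_nonneg _
  have habs : |t₁ - t₂| = t₂ - t₁ := by
    rw [abs_sub_comm]; exact abs_of_nonneg (by linarith)
  set K := Ex * (B * (t₂ - t₁ + Δx)) with hKd
  have hBΔ0 : 0 ≤ B * (t₂ - t₁ + Δx) :=
    mul_nonneg (by linarith) (by linarith)
  have hK0 : 0 ≤ K := mul_nonneg (by linarith) hBΔ0
  have hBK : B * (t₂ - t₁ + Δx) ≤ K := le_mul_of_one_le_left hBΔ0 hEx1
  suffices h : |y t₁ x₁ - y t₂ x₂| ≤ M0 * K by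
    rw [habs]
    have heq : M0 * K = M0 * B * Ex * (t₂ - t₁ + Δx) := by rw [hKd]; ring
    linarith
  -- speed bounds
  have sp₁ : ∀ α β, e₁ ≤ α → α ≤ β → β ≤ f₁ →
      c * (β - α) ≤ ψ₁ β - ψ₁ α ∧ ψ₁ β - ψ₁ α ≤ Ma * (β - α) := by
    intro α β h1 h2 h3
    exact speed_aux ha_pos ha_bdd (he₁0.trans h1) h2 (h3.trans hf₁T)
      (fun s hs => (ode₁ s ⟨h1.trans hs.1, hs.2.trans h3⟩).mono (Set.Icc_subset_Icc h1 h3))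
      (fun s hs => mem₁ s ⟨h1.trans hs.1, hs.2.trans h3⟩)
  have sp₂ : ∀ α β, e₂ ≤ α → α ≤ β → β ≤ f₂ →
      c * (β - α) ≤ ψ₂ β - ψ₂ α ∧ ψ₂ β - ψ₂ α ≤ Ma * (β - α) := by
    intro α β h1 h2 h3
    exact speed_aux ha_pos ha_bdd (he₂0.trans h1) h2 (h3.trans hf₂T)
      (fun s hs => (ode₂ s ⟨h1.trans hs.1, hs.2.trans h3⟩).mono (Set.Icc_subset_Icc h1 h3))
      (fun s hs => mem₂ s ⟨h1.trans hs.1, hs.2.trans h3⟩)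
  have hyv₁ : y t₁ x₁ = if 0 < e₁ then yl e₁ else y0 (ψ₁ 0) := hy t₁ ht₁ x₁ hx₁
  have hyv₂ : y t₂ x₂ = if 0 < e₂ then yl e₂ else y0 (ψ₂ 0) := hy t₂ ht₂ x₂ hx₂
  rcases le_or_gt e₂ t₁ with hA | hB
  · -- both characteristics exist on [m, t₁]
    set m := max e₁ e₂ with hmd
    have hm0 : 0 ≤ m := le_trans he₁0 (le_max_left _ _)
    have hmt₁ : m ≤ t₁ := max_le he₁t hA
    have hG : ∀ s ∈ Set.Icc m t₁, |ψ₁ s - ψ₂ s| ≤ K := by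
      have hsub₁ : Set.Icc m t₁ ⊆ Set.Icc e₁ f₁ := Set.Icc_subset_Icc (le_max_left _ _) ht₁f
      have hsub₂ : Set.Icc m t₁ ⊆ Set.Icc e₂ f₂ :=
        Set.Icc_subset_Icc (le_max_right _ _) (h12.trans ht₂f)
      have hgr := gron_aux hL ha_lip hm0 hmt₁ ht₁.2
        (fun s hs => (ode₁ s (hsub₁ hs)).mono hsub₁)
        (fun s hs => (ode₂ s (hsub₂ hs)).mono hsub₂)
        (fun s hs => mem₁ s (hsub₁ hs)) (fun s hs => mem₂ s (hsub₂ hs))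
      intro s hs
      have h1 := hgr s hs
      have hD : |ψ₁ t₁ - ψ₂ t₁| ≤ B * (t₂ - t₁ + Δx) := by
        have hsp := sp₂ t₁ t₂ hA h12 ht₂f
        have htr : |ψ₁ t₁ - ψ₂ t₁| ≤ |x₁ - x₂| + |ψ₂ t₂ - ψ₂ t₁| := by
          rw [hinit₁]
          calc |x₁ - ψ₂ t₁| = |(x₁ - x₂) + (ψ₂ t₂ - ψ₂ t₁)| := by rw [hinit₂]; ring_nf
            _ ≤ |x₁ - x₂| + |ψ₂ t₂ - ψ₂ t₁| := abs_add_le _ _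
        have habs2 : |ψ₂ t₂ - ψ₂ t₁| = ψ₂ t₂ - ψ₂ t₁ :=
          abs_of_nonneg (by linarith [hsp.1, mul_nonneg hc.le (sub_nonneg.mpr h12)])
        linarith [hsp.2, mul_le_mul_of_nonneg_right hMaB (sub_nonneg.mpr h12),
          le_mul_of_one_le_left hΔx0 hB1]
      have hexp : Real.exp (L * (t₁ - s)) ≤ Ex := by
        rw [hExd]
        apply Real.exp_le_exp.mpr
        have h1 : t₁ - s ≤ T := by have := hs.1; have := ht₁.2; linarith [hm0]
        exact mul_le_mul_of_nonneg_left h1 hL.le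
      calc |ψ₁ s - ψ₂ s| ≤ Real.exp (L * (t₁ - s)) * |ψ₁ t₁ - ψ₂ t₁| := h1
        _ ≤ Ex * (B * (t₂ - t₁ + Δx)) := by
            apply mul_le_mul hexp hD (abs_nonneg _) (by linarith)
    rcases eq_or_lt_of_le he₁0 with h0₁ | h0₁ <;> rcases eq_or_lt_of_le he₂0 with h0₂ | h0₂
    · -- e₁ = 0, e₂ = 0
      rw [hyv₁, if_neg (by rw [← h0₁]; exact lt_irrefl 0),
        hyv₂, if_neg (by rw [← h0₂]; exact lt_irrefl 0)]
      have h0m : (0:ℝ) ∈ Set.Icc m t₁ := by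
        constructor
        · rw [hmd, ← h0₁, ← h0₂]; simp
        · exact ht₁.1
      calc |y0 (ψ₁ 0) - y0 (ψ₂ 0)| ≤ L0 * |ψ₁ 0 - ψ₂ 0| := hy0_lip _ _
        _ ≤ M0 * K := mul_le_mul hL0M (hG 0 h0m) (abs_nonneg _) hM0
    · -- e₁ = 0, e₂ > 0
      rw [hyv₁, if_neg (by rw [← h0₁]; exact lt_irrefl 0), hyv₂, if_pos h0₂]
      have hz₂ : ψ₂ e₂ = 0 := he_exit t₂ ht₂ x₂ hx₂ h0₂
      have hψ₁0 : 0 ≤ ψ₁ 0 := (mem₁ 0 ⟨le_of_eq h0₁.symm, ht₁.1.trans ht₁f⟩).1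
      have hme₂ : m = e₂ := max_eq_right (by linarith)
      have hGe₂ := hG e₂ ⟨hme₂.le, hA⟩
      have hsp := sp₁ 0 e₂ (le_of_eq h0₁.symm) h0₂.le (hA.trans ht₁f)
      have hub : ψ₁ 0 + c * e₂ ≤ K := by
        rw [hz₂, sub_zero] at hGe₂
        have := le_abs_self (ψ₁ e₂)
        linarith [hsp.1]
      have htri : |y0 (ψ₁ 0) - yl e₂| ≤ L0 * ψ₁ 0 + Ll * e₂ := by
        have h1 := hy0_lip (ψ₁ 0) 0
        have h2 := hyl_lip 0 e₂
        rw [sub_zero, abs_of_nonneg hψ₁0] at h1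
        rw [zero_sub, abs_neg, abs_of_nonneg h0₂.le] at h2
        calc |y0 (ψ₁ 0) - yl e₂| = |(y0 (ψ₁ 0) - y0 0) + (yl 0 - yl e₂)| := by
              rw [hcomp]; ring_nf
          _ ≤ |y0 (ψ₁ 0) - y0 0| + |yl 0 - yl e₂| := abs_add_le _ _
          _ ≤ L0 * ψ₁ 0 + Ll * e₂ := add_le_add h1 h2
      linarith [mul_le_mul_of_nonneg_left hub hM0, mul_nonneg (sub_nonneg.mpr hL0M) hψ₁0,
        mul_nonneg (sub_nonneg.mpr hLlM) h0₂.le]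
    · -- e₁ > 0, e₂ = 0
      rw [hyv₁, if_pos h0₁, hyv₂, if_neg (by rw [← h0₂]; exact lt_irrefl 0)]
      have hz₁ : ψ₁ e₁ = 0 := he_exit t₁ ht₁ x₁ hx₁ h0₁
      have hψ₂0 : 0 ≤ ψ₂ 0 := (mem₂ 0 ⟨le_of_eq h0₂.symm, ht₂.1.trans ht₂f⟩).1
      have hme₁ : m = e₁ := max_eq_left (by linarith)
      have hGe₁ := hG e₁ ⟨hme₁.le, he₁t⟩
      have hsp := sp₂ 0 e₁ (le_of_eq h0₂.symm) h0₁.le (he₁t.trans (h12.trans ht₂f))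
      have hub : ψ₂ 0 + c * e₁ ≤ K := by
        rw [hz₁, zero_sub, abs_neg] at hGe₁
        have := le_abs_self (ψ₂ e₁)
        linarith [hsp.1]
      have htri : |yl e₁ - y0 (ψ₂ 0)| ≤ Ll * e₁ + L0 * ψ₂ 0 := by
        have h1 := hyl_lip e₁ 0
        have h2 := hy0_lip 0 (ψ₂ 0)
        rw [sub_zero, abs_of_nonneg h0₁.le] at h1
        rw [zero_sub, abs_neg, abs_of_nonneg hψ₂0] at h2
        calc |yl e₁ - y0 (ψ₂ 0)| = |(yl e₁ - yl 0) + (y0 0 - y0 (ψ₂ 0))| := by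
              rw [← hcomp]; ring_nf
          _ ≤ |yl e₁ - yl 0| + |y0 0 - y0 (ψ₂ 0)| := abs_add_le _ _
          _ ≤ Ll * e₁ + L0 * ψ₂ 0 := add_le_add h1 h2
      linarith [mul_le_mul_of_nonneg_left hub hM0, mul_nonneg (sub_nonneg.mpr hL0M) hψ₂0,
        mul_nonneg (sub_nonneg.mpr hLlM) h0₁.le]
    · -- e₁ > 0, e₂ > 0
      rw [hyv₁, if_pos h0₁, hyv₂, if_pos h0₂]
      have hz₁ : ψ₁ e₁ = 0 := he_exit t₁ ht₁ x₁ hx₁ h0₁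
      have hz₂ : ψ₂ e₂ = 0 := he_exit t₂ ht₂ x₂ hx₂ h0₂
      have hce : c * |e₁ - e₂| ≤ K := by
        rcases le_total e₁ e₂ with hee | hee
        · have hme₂ : m = e₂ := max_eq_right hee
          have hGe₂ := hG e₂ ⟨hme₂.le, hA⟩
          have hsp := sp₁ e₁ e₂ (le_refl _) hee (hA.trans ht₁f)
          rw [hz₂, sub_zero] at hGe₂
          rw [abs_of_nonpos (by linarith)]
          have := le_abs_self (ψ₁ e₂)
          have := hsp.1
          rw [hz₁, sub_zero] at this
          linarith
        · have hme₁ : m = e₁ := max_eq_left hee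
          have hGe₁ := hG e₁ ⟨hme₁.le, he₁t⟩
          have hsp := sp₂ e₂ e₁ (le_refl _) hee (he₁t.trans (h12.trans ht₂f))
          rw [hz₁, zero_sub, abs_neg] at hGe₁
          rw [abs_of_nonneg (by linarith)]
          have := le_abs_self (ψ₂ e₁)
          have := hsp.1
          rw [hz₂, sub_zero] at this
          linarith
      calc |yl e₁ - yl e₂| ≤ Ll * |e₁ - e₂| := hyl_lip _ _
        _ ≤ M0 * K := by
            linarith [mul_le_mul_of_nonneg_left hce hM0,
              mul_nonneg (sub_nonneg.mpr hLlM) (abs_nonneg (e₁ - e₂))]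
  · -- t₁ < e₂
    have h0₂ : 0 < e₂ := lt_of_le_of_lt ht₁.1 hB
    have hz₂ : ψ₂ e₂ = 0 := he_exit t₂ ht₂ x₂ hx₂ h0₂
    have hsp₂ := sp₂ e₂ t₂ (le_refl _) he₂t ht₂f
    have hx₂ub : x₂ ≤ Ma * (t₂ - e₂) := by
      have := hsp₂.2; rw [hinit₂, hz₂, sub_zero] at this; exact this
    have hx₁ub : x₁ ≤ x₂ + Δx := by
      have := le_abs_self (x₁ - x₂); rw [← hΔxd] at this; linarith
    rcases eq_or_lt_of_le he₁0 with h0₁ | h0₁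
    · -- e₁ = 0
      rw [hyv₁, if_neg (by rw [← h0₁]; exact lt_irrefl 0), hyv₂, if_pos h0₂]
      have hψ₁0 : 0 ≤ ψ₁ 0 := (mem₁ 0 ⟨le_of_eq h0₁.symm, ht₁.1.trans ht₁f⟩).1
      have hsp₁ := sp₁ 0 t₁ (le_of_eq h0₁.symm) ht₁.1 ht₁f
      have hψ₁0ub : ψ₁ 0 ≤ x₁ - c * t₁ := by
        have := hsp₁.1; rw [hinit₁] at this; linarith
      have hub : ψ₁ 0 + c * e₂ ≤ B * (t₂ - t₁ + Δx) := by
        linarith [mul_le_mul_of_nonneg_right hcMa (show (0:ℝ) ≤ e₂ - t₁ by linarith),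
          mul_le_mul_of_nonneg_right hMaB (show (0:ℝ) ≤ t₂ - t₁ by linarith),
          mul_le_mul_of_nonneg_right hB1 hΔx0]
      have htri : |y0 (ψ₁ 0) - yl e₂| ≤ L0 * ψ₁ 0 + Ll * e₂ := by
        have h1 := hy0_lip (ψ₁ 0) 0
        have h2 := hyl_lip 0 e₂
        rw [sub_zero, abs_of_nonneg hψ₁0] at h1
        rw [zero_sub, abs_neg, abs_of_nonneg h0₂.le] at h2
        calc |y0 (ψ₁ 0) - yl e₂| = |(y0 (ψ₁ 0) - y0 0) + (yl 0 - yl e₂)| := by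
              rw [hcomp]; ring_nf
          _ ≤ |y0 (ψ₁ 0) - y0 0| + |yl 0 - yl e₂| := abs_add_le _ _
          _ ≤ L0 * ψ₁ 0 + Ll * e₂ := add_le_add h1 h2
      have hubK : ψ₁ 0 + c * e₂ ≤ K := le_trans hub hBK
      linarith [mul_le_mul_of_nonneg_left hubK hM0, mul_nonneg (sub_nonneg.mpr hL0M) hψ₁0,
        mul_nonneg (sub_nonneg.mpr hLlM) h0₂.le]
    · -- e₁ > 0
      rw [hyv₁, if_pos h0₁, hyv₂, if_pos h0₂]
      have hz₁ : ψ₁ e₁ = 0 := he_exit t₁ ht₁ x₁ hx₁ h0₁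
      have hsp₁ := sp₁ e₁ t₁ (le_refl _) he₁t ht₁f
      have hx₁lb : c * (t₁ - e₁) ≤ x₁ := by
        have := hsp₁.1; rw [hinit₁, hz₁, sub_zero] at this; exact this
      have hce : c * (e₂ - e₁) ≤ B * (t₂ - t₁ + Δx) := by
        linarith [mul_le_mul_of_nonneg_right hcMa (show (0:ℝ) ≤ e₂ - t₁ by linarith),
          mul_le_mul_of_nonneg_right hMaB (show (0:ℝ) ≤ t₂ - t₁ by linarith),
          mul_le_mul_of_nonneg_right hB1 hΔx0]
      have hceK : c * (e₂ - e₁) ≤ K := le_trans hce hBK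
      have habse : |e₁ - e₂| = e₂ - e₁ := by
        rw [abs_sub_comm]; exact abs_of_nonneg (by linarith)
      calc |yl e₁ - yl e₂| ≤ Ll * |e₁ - e₂| := hyl_lip _ _
        _ ≤ M0 * K := by
            rw [habse]
            linarith [mul_le_mul_of_nonneg_left hceK hM0,
              mul_nonneg (sub_nonneg.mpr hLlM) (show (0:ℝ) ≤ e₂ - e₁ by linarith)]


/-- Lipschitz bound for the weak solution of the transport equation defined by
the method of characteristics: if `y_l` is `L_l`-Lipschitz, `y₀` is `L₀`-Lipschitz,
`y_l(0) = y₀(0)`, `a` is bounded by `Ma`, `L`-Lipschitz in `x`, and `a ≥ c > 0`, then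
the function `y(t,x) = y_l(e(t,x))` (if `e(t,x) > 0`), `= y₀(φ(0,t,x))` (otherwise)
is `M`-Lipschitz with `M = max(L_l/c, L₀)·max(1, Ma)·e^{LT}`. -/
theorem stmt_9 (T c L Ma Ll L0 : ℝ) (hT : 0 < T) (hc : 0 < c) (hL : 0 < L) (hMa : 0 ≤ Ma)
    (a : ℝ → ℝ → ℝ)
    (ha_cont : ContinuousOn (fun p : ℝ × ℝ => a p.1 p.2) (Set.Icc 0 T ×ˢ Set.Icc 0 1))
    (ha_pos : ∀ t ∈ Set.Icc (0:ℝ) T, ∀ x ∈ Set.Icc (0:ℝ) 1, c ≤ a t x)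
    (ha_bdd : ∀ t ∈ Set.Icc (0:ℝ) T, ∀ x ∈ Set.Icc (0:ℝ) 1, |a t x| ≤ Ma)
    (ha_lip : ∀ t ∈ Set.Icc (0:ℝ) T, ∀ x ∈ Set.Icc (0:ℝ) 1, ∀ x' ∈ Set.Icc (0:ℝ) 1,
      |a t x - a t x'| ≤ L * |x - x'|)
    -- the flow and entrance time
    (φ : ℝ → ℝ → ℝ → ℝ) (e f : ℝ → ℝ → ℝ)
    (hef : ∀ t ∈ Set.Icc (0:ℝ) T, ∀ x ∈ Set.Icc (0:ℝ) 1,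
      0 ≤ e t x ∧ e t x ≤ t ∧ t ≤ f t x ∧ f t x ≤ T)
    (hφ_init : ∀ t ∈ Set.Icc (0:ℝ) T, ∀ x ∈ Set.Icc (0:ℝ) 1, φ t t x = x)
    (hφ_mem : ∀ t ∈ Set.Icc (0:ℝ) T, ∀ x ∈ Set.Icc (0:ℝ) 1,
      ∀ s ∈ Set.Icc (e t x) (f t x), φ s t x ∈ Set.Icc (0:ℝ) 1)
    (hφ_ode : ∀ t ∈ Set.Icc (0:ℝ) T, ∀ x ∈ Set.Icc (0:ℝ) 1,
      ∀ s ∈ Set.Icc (e t x) (f t x),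
        HasDerivWithinAt (fun σ => φ σ t x) (a s (φ s t x)) (Set.Icc (e t x) (f t x)) s)
    (he_exit : ∀ t ∈ Set.Icc (0:ℝ) T, ∀ x ∈ Set.Icc (0:ℝ) 1,
      0 < e t x → φ (e t x) t x = 0)
    -- Lipschitz data, compatible at the corner
    (yl y0 : ℝ → ℝ)
    (hyl_lip : ∀ t t' : ℝ, |yl t - yl t'| ≤ Ll * |t - t'|)
    (hy0_lip : ∀ x x' : ℝ, |y0 x - y0 x'| ≤ L0 * |x - x'|)
    (hcomp : yl 0 = y0 0)
    -- the function defined by the method of characteristics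
    (y : ℝ → ℝ → ℝ)
    (hy : ∀ t ∈ Set.Icc (0:ℝ) T, ∀ x ∈ Set.Icc (0:ℝ) 1,
      y t x = if 0 < e t x then yl (e t x) else y0 (φ 0 t x)) :
    ∀ t₁ ∈ Set.Icc (0:ℝ) T, ∀ x₁ ∈ Set.Icc (0:ℝ) 1,
    ∀ t₂ ∈ Set.Icc (0:ℝ) T, ∀ x₂ ∈ Set.Icc (0:ℝ) 1,
      |y t₁ x₁ - y t₂ x₂| ≤
        max (Ll / c) L0 * max 1 Ma * Real.exp (L * T) * (|t₁ - t₂| + |x₁ - x₂|) := by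
  intro t₁ ht₁ x₁ hx₁ t₂ ht₂ x₂ hx₂
  rcases le_total t₁ t₂ with h12 | h12
  · exact key_lip T c L Ma Ll L0 hT hc hL hMa a ha_pos ha_bdd ha_lip φ e f hef hφ_init
      hφ_mem hφ_ode he_exit yl y0 hyl_lip hy0_lip hcomp y hy t₁ x₁ t₂ x₂ ht₁ hx₁ ht₂ hx₂ h12
  · rw [abs_sub_comm (y t₁ x₁), abs_sub_comm t₁, abs_sub_comm x₁]
    exact key_lip T c L Ma Ll L0 hT hc hL hMa a ha_pos ha_bdd ha_lip φ e f hef hφ_init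
      hφ_mem hφ_ode he_exit yl y0 hyl_lip hy0_lip hcomp y hy t₂ x₂ t₁ x₁ ht₂ hx₂ ht₁ hx₁ h12
end
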